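/- arXiv:1009.5887 — 3 statements merged into one kernel-verified Lean document; each statement's English description precedes it below -/
import Mathlib

section
/- Let φ : Σ_A⁺ → ℝ be continuous with φ(x) > 0 for all x. Then the diagonal operator K on ℓ²(W*) defined by (Kξ)(w) = e^{−φ^{|w|}(w x^{t(w)})} ξ(w) is a compact operator. -/
open scoped BigOperators Classical
open Filter Topology MeasureTheory

namespace SpectralGibbs

/-- The one-sided shift space `Σ_A⁺` determined by a `k × k` zero-one matrix `A`. -/
abbrev ShiftSpace (k : ℕ) (A : Matrix (Fin k) (Fin k) ℕ) : Type :=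
  {x : ℕ → Fin k // ∀ m : ℕ, A (x m) (x (m + 1)) = 1}

/-- `A` has entries in `{0,1}`. -/
def ZeroOne (k : ℕ) (A : Matrix (Fin k) (Fin k) ℕ) : Prop :=
  ∀ i j : Fin k, A i j = 0 ∨ A i j = 1

/-- `A` is aperiodic: some power of `A` has all entries positive. -/
def Aperiodic (k : ℕ) (A : Matrix (Fin k) (Fin k) ℕ) : Prop :=
  ∃ n : ℕ, 1 ≤ n ∧ ∀ i j : Fin k, 0 < (A ^ n) i j

/-- The shift map `σ`. -/
def shift (k : ℕ) (A : Matrix (Fin k) (Fin k) ℕ) :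
    ShiftSpace k A → ShiftSpace k A :=
  fun x => ⟨fun m => x.1 (m + 1), fun m => x.2 (m + 1)⟩

/-- The metric `d(x,y) = 2^{-min{m : x_m ≠ y_m}}` for `x ≠ y` (and `0` for `x = y`). -/
noncomputable def dist' (k : ℕ) (A : Matrix (Fin k) (Fin k) ℕ)
    (x y : ShiftSpace k A) : ℝ :=
  if x = y then 0 else (2 : ℝ)⁻¹ ^ sInf {m : ℕ | x.1 m ≠ y.1 m}

/-- `f` is `α`-Hölder: `sup_{x ≠ y} ‖f x - f y‖ / d(x,y)^α < ∞`. -/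
def IsHolder {E : Type*} [NormedAddCommGroup E] (k : ℕ) (A : Matrix (Fin k) (Fin k) ℕ)
    (α : ℝ) (f : ShiftSpace k A → E) : Prop :=
  ∃ C : ℝ, ∀ x y : ShiftSpace k A, ‖f x - f y‖ ≤ C * dist' k A x y ^ α

/-- The sequence `ix` obtained by prepending the symbol `i` to a sequence `x`. -/
def consSeq (k : ℕ) (i : Fin k) (x : ℕ → Fin k) : ℕ → Fin k
  | 0 => i
  | m + 1 => x m

/-- The point `ix ∈ Σ_A⁺`, defined whenever `A(i, x_0) = 1`. -/
def cons (k : ℕ) (A : Matrix (Fin k) (Fin k) ℕ) (i : Fin k) (x : ShiftSpace k A)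
    (h : A i (x.1 0) = 1) : ShiftSpace k A :=
  ⟨consSeq k i x.1, by
    intro m
    match m with
    | 0 => exact h
    | m + 1 => exact x.2 m⟩

/-- The transfer operator `(L_ψ g)(x) = Σ_{σ y = x} e^{ψ(y)} g(y)`. -/
noncomputable def transfer {E : Type*} [AddCommMonoid E] [SMul ℝ E]
    (k : ℕ) (A : Matrix (Fin k) (Fin k) ℕ)
    (ψ : ShiftSpace k A → ℝ) (g : ShiftSpace k A → E) (x : ShiftSpace k A) : E :=
  ∑ i : Fin k,
    if h : A i (x.1 0) = 1 then Real.exp (ψ (cons k A i x h)) • g (cons k A i x h) else 0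

/-- `-φ` is normalized: `Σ_{σ y = x} e^{-φ(y)} = 1` for all `x`. -/
def NormalizedNeg (k : ℕ) (A : Matrix (Fin k) (Fin k) ℕ) (φ : ShiftSpace k A → ℝ) : Prop :=
  ∀ x : ShiftSpace k A, transfer k A (fun y => -φ y) (fun _ => (1 : ℝ)) x = 1

/-- Birkhoff sum `φ^n = φ + φ∘σ + ⋯ + φ∘σ^{n-1}`. -/
noncomputable def birk (k : ℕ) (A : Matrix (Fin k) (Fin k) ℕ)
    (φ : ShiftSpace k A → ℝ) (n : ℕ) (x : ShiftSpace k A) : ℝ :=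
  ∑ i ∈ Finset.range n, φ ((shift k A)^[i] x)

/-- A word `w = (w_1, …, w_{n+1})` (of length `n+1 ≥ 1`) is allowed if consecutive
letters are compatible with `A`. -/
def Allowed (k : ℕ) (A : Matrix (Fin k) (Fin k) ℕ) {n : ℕ} (w : Fin (n + 1) → Fin k) : Prop :=
  ∀ i : Fin n, A (w i.castSucc) (w i.succ) = 1

/-- `W*`: the set of all allowed finite words (of length `≥ 1`). -/
def Words (k : ℕ) (A : Matrix (Fin k) (Fin k) ℕ) : Type :=
  Σ n : ℕ, {w : Fin (n + 1) → Fin k // Allowed k A w}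

/-- The length `|w|` of a word. -/
def wordLen (k : ℕ) (A : Matrix (Fin k) (Fin k) ℕ) (w : Words k A) : ℕ := w.1 + 1

/-- The last letter `t(w)` of a word. -/
def wordLast (k : ℕ) (A : Matrix (Fin k) (Fin k) ℕ) (w : Words k A) : Fin k :=
  w.2.1 (Fin.last w.1)

/-- The concatenated sequence `w x`. -/
def wordSeq (k : ℕ) {n : ℕ} (w : Fin (n + 1) → Fin k) (x : ℕ → Fin k) : ℕ → Fin k :=
  fun m => if h : m < n + 1 then w ⟨m, h⟩ else x (m - (n + 1))

theorem glue_mem (k : ℕ) (A : Matrix (Fin k) (Fin k) ℕ) {n : ℕ}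
    (w : Fin (n + 1) → Fin k) (hw : Allowed k A w) (x : ShiftSpace k A)
    (hx : A (w (Fin.last n)) (x.1 0) = 1) :
    ∀ m : ℕ, A (wordSeq k w x.1 m) (wordSeq k w x.1 (m + 1)) = 1 := by
  intro m
  unfold wordSeq
  rcases lt_trichotomy (m + 1) (n + 1) with h | h | h
  · have hm : m < n + 1 := by omega
    rw [dif_pos hm, dif_pos h]
    exact hw ⟨m, by omega⟩
  · have hm : m < n + 1 := by omega
    rw [dif_pos hm, dif_neg (by omega)]
    have h0 : m + 1 - (n + 1) = 0 := by omega
    rw [h0]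
    have hl : (⟨m, hm⟩ : Fin (n + 1)) = Fin.last n := by
      apply Fin.ext
      simp only [Fin.last]
      omega
    rw [hl]
    exact hx
  · rw [dif_neg (by omega), dif_neg (by omega)]
    have h1 : m + 1 - (n + 1) = (m - (n + 1)) + 1 := by omega
    rw [h1]
    exact x.2 (m - (n + 1))

/-- The point `w x ∈ Σ_A⁺`, for an allowed word `w` and `x` with `A(t(w), x_0) = 1`. -/
def glue (k : ℕ) (A : Matrix (Fin k) (Fin k) ℕ) {n : ℕ}
    (w : Fin (n + 1) → Fin k) (hw : Allowed k A w) (x : ShiftSpace k A)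
    (hx : A (w (Fin.last n)) (x.1 0) = 1) : ShiftSpace k A :=
  ⟨wordSeq k w x.1, glue_mem k A w hw x hx⟩

/-- Given a family of points `p j` with `A(j, (p j)_0) = 1`, the point `w p^{t(w)}`. -/
def wordPt (k : ℕ) (A : Matrix (Fin k) (Fin k) ℕ) {n : ℕ}
    (w : Fin (n + 1) → Fin k) (hw : Allowed k A w)
    (p : Fin k → ShiftSpace k A) (hp : ∀ j : Fin k, A j ((p j).1 0) = 1) : ShiftSpace k A :=
  glue k A w hw (p (w (Fin.last n))) (hp _)

/-- The point `w p^{t(w)}` for `w ∈ W*`. -/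
def wpt (k : ℕ) (A : Matrix (Fin k) (Fin k) ℕ)
    (p : Fin k → ShiftSpace k A) (hp : ∀ j : Fin k, A j ((p j).1 0) = 1)
    (w : Words k A) : ShiftSpace k A :=
  wordPt k A w.2.1 w.2.2 p hp

/-- The indicator function `χ_j` of the cylinder `[j] = {x : x_0 = j}`. -/
noncomputable def cylInd (k : ℕ) (A : Matrix (Fin k) (Fin k) ℕ) (j : Fin k) :
    ShiftSpace k A → ℝ :=
  fun x => if x.1 0 = j then 1 else 0


/-- The eigenvalue family of `π(f)|D_φ|⁻¹`, indexed by `W* × {1,2}`. -/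
noncomputable def eigval (k : ℕ) (A : Matrix (Fin k) (Fin k) ℕ)
    (xp : Fin k → ShiftSpace k A) (hxp : ∀ j : Fin k, A j ((xp j).1 0) = 1)
    (yp : Fin k → ShiftSpace k A) (hyp : ∀ j : Fin k, A j ((yp j).1 0) = 1)
    (zp : Fin k → ShiftSpace k A) (hzp : ∀ j : Fin k, A j ((zp j).1 0) = 1)
    (φ f : ShiftSpace k A → ℝ) : Words k A × Fin 2 → ℝ :=
  fun p =>
    (if p.2 = 0 then f (wpt k A yp hyp p.1) else f (wpt k A zp hzp p.1)) *
      Real.exp (-(birk k A φ (wordLen k A p.1) (wpt k A xp hxp p.1)))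

section DiagHelpers

open scoped ENNReal

variable {ι : Type*}

lemma memℓp_two_mul (a : ι → ℂ) (C : ℝ) (hC : 0 ≤ C) (ha : ∀ i, ‖a i‖ ≤ C)
    (ξ : lp (fun _ : ι => ℂ) 2) : Memℓp (fun i => a i * ξ i) 2 := by
  apply memℓp_gen
  have h2 : (0 : ℝ) < (2 : ℝ≥0∞).toReal := by norm_num
  have hs := (lp.memℓp ξ).summable h2
  refine Summable.of_nonneg_of_le (fun i => Real.rpow_nonneg (norm_nonneg _) _)
    (fun i => ?_) (hs.mul_left (C ^ (2 : ℝ≥0∞).toReal))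
  calc ‖a i * ξ i‖ ^ (2 : ℝ≥0∞).toReal
      ≤ (C * ‖ξ i‖) ^ (2 : ℝ≥0∞).toReal := by
        apply Real.rpow_le_rpow (norm_nonneg _) ?_ (by norm_num)
        rw [norm_mul]
        exact mul_le_mul_of_nonneg_right (ha i) (norm_nonneg _)
    _ = C ^ (2 : ℝ≥0∞).toReal * ‖ξ i‖ ^ (2 : ℝ≥0∞).toReal :=
        Real.mul_rpow hC (norm_nonneg _)

lemma lp_norm_le_mul {f ξ : lp (fun _ : ι => ℂ) 2} {C : ℝ} (hC : 0 ≤ C)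
    (h : ∀ i, ‖f i‖ ≤ C * ‖ξ i‖) : ‖f‖ ≤ C * ‖ξ‖ := by
  have h2 : (0 : ℝ) < (2 : ℝ≥0∞).toReal := by norm_num
  refine lp.norm_le_of_tsum_le h2 (mul_nonneg hC (norm_nonneg _)) ?_
  have key : ∀ i, ‖f i‖ ^ (2 : ℝ≥0∞).toReal
      ≤ C ^ (2 : ℝ≥0∞).toReal * ‖ξ i‖ ^ (2 : ℝ≥0∞).toReal := by
    intro i
    rw [← Real.mul_rpow hC (norm_nonneg _)]
    exact Real.rpow_le_rpow (norm_nonneg _) (h i) (by norm_num)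
  calc ∑' i, ‖f i‖ ^ (2 : ℝ≥0∞).toReal
      ≤ ∑' i, C ^ (2 : ℝ≥0∞).toReal * ‖ξ i‖ ^ (2 : ℝ≥0∞).toReal :=
        Summable.tsum_le_tsum key ((lp.memℓp f).summable h2)
          (((lp.memℓp ξ).summable h2).mul_left _)
    _ = C ^ (2 : ℝ≥0∞).toReal * ∑' i, ‖ξ i‖ ^ (2 : ℝ≥0∞).toReal := tsum_mul_left
    _ = C ^ (2 : ℝ≥0∞).toReal * ‖ξ‖ ^ (2 : ℝ≥0∞).toReal := by
        rw [lp.norm_rpow_eq_tsum h2]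
    _ = (C * ‖ξ‖) ^ (2 : ℝ≥0∞).toReal := (Real.mul_rpow hC (norm_nonneg _)).symm

/-- The diagonal multiplication operator on `ℓ²` with multiplier `a` bounded by `C`. -/
noncomputable def diagCLM (a : ι → ℂ) (C : ℝ) (hC : 0 ≤ C) (ha : ∀ i, ‖a i‖ ≤ C) :
    lp (fun _ : ι => ℂ) 2 →L[ℂ] lp (fun _ : ι => ℂ) 2 :=
  LinearMap.mkContinuous
    { toFun := fun ξ => ⟨fun i => a i * ξ i, memℓp_two_mul a C hC ha ξ⟩
      map_add' := fun ξ η => by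
        apply lp.ext
        funext i
        simp only [lp.coeFn_add, Pi.add_apply]
        change a i * (ξ i + η i) = a i * ξ i + a i * η i
        ring
      map_smul' := fun c ξ => by
        apply lp.ext
        funext i
        simp only [lp.coeFn_smul, Pi.smul_apply, RingHom.id_apply, smul_eq_mul]
        change a i * (c * ξ i) = c * (a i * ξ i)
        ring }
    C
    (fun ξ => by
      apply lp_norm_le_mul hC
      intro i
      change ‖a i * ξ i‖ ≤ C * ‖ξ i‖
      rw [norm_mul]
      exact mul_le_mul_of_nonneg_right (ha i) (norm_nonneg _))

lemma diagCLM_apply (a : ι → ℂ) (C : ℝ) (hC : 0 ≤ C) (ha : ∀ i, ‖a i‖ ≤ C)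
    (ξ : lp (fun _ : ι => ℂ) 2) (i : ι) :
    diagCLM a C hC ha ξ i = a i * ξ i := rfl

lemma isCompactOperator_diagCLM (a : ι → ℂ) (C : ℝ) (hC : 0 ≤ C)
    (ha : ∀ i, ‖a i‖ ≤ C) (h0 : Filter.Tendsto a Filter.cofinite (𝓝 0)) :
    IsCompactOperator (diagCLM a C hC ha) := by
  classical
  set T := diagCLM a C hC ha with hT
  have haS : ∀ s : Finset ι, ∀ i, ‖(if i ∈ s then a i else 0 : ℂ)‖ ≤ C := by
    intro s i
    split
    · exact ha i
    · simpa using hC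
  set F : Finset ι → (lp (fun _ : ι => ℂ) 2 →L[ℂ] lp (fun _ : ι => ℂ) 2) :=
    fun s => diagCLM (fun i => if i ∈ s then a i else 0) C hC (haS s) with hF
  have hcpt : ∀ s : Finset ι, IsCompactOperator (F s) := by
    intro s
    -- the finite-rank factor through `↥s → ℂ`
    have memg : ∀ v : (↥s → ℂ),
        Memℓp (fun i => if h : i ∈ s then a i * v ⟨i, h⟩ else 0) 2 := by
      intro v
      refine Memℓp.of_exponent_ge (memℓp_zero ?_) zero_le
      refine s.finite_toSet.subset ?_
      intro i hi
      simp only [Set.mem_setOf_eq] at hi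
      by_contra hmem
      exact hi (dif_neg fun h => hmem (Finset.mem_coe.mpr h))
    let g : (↥s → ℂ) →ₗ[ℂ] lp (fun _ : ι => ℂ) 2 :=
      { toFun := fun v => ⟨fun i => if h : i ∈ s then a i * v ⟨i, h⟩ else 0, memg v⟩
        map_add' := fun v w => by
          apply lp.ext
          funext i
          simp only [lp.coeFn_add, Pi.add_apply]
          change (if h : i ∈ s then a i * (v + w) ⟨i, h⟩ else 0) =
            (if h : i ∈ s then a i * v ⟨i, h⟩ else 0) +
              (if h : i ∈ s then a i * w ⟨i, h⟩ else 0)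
          by_cases h : i ∈ s
          · simp [h, mul_add]
          · simp [h]
        map_smul' := fun c v => by
          apply lp.ext
          funext i
          simp only [lp.coeFn_smul, Pi.smul_apply, RingHom.id_apply, smul_eq_mul]
          change (if h : i ∈ s then a i * (c • v) ⟨i, h⟩ else 0) =
            c * (if h : i ∈ s then a i * v ⟨i, h⟩ else 0)
          by_cases h : i ∈ s
          · simp [h]; ring
          · simp [h] }
    let G : (↥s → ℂ) →L[ℂ] lp (fun _ : ι => ℂ) 2 :=
      ⟨g, g.continuous_of_finiteDimensional⟩
    let P : lp (fun _ : ι => ℂ) 2 →L[ℂ] (↥s → ℂ) :=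
      LinearMap.mkContinuous
        { toFun := fun ξ (i : ↥s) => ξ (i : ι)
          map_add' := fun ξ η => by
            funext i
            simp [lp.coeFn_add]
          map_smul' := fun c ξ => by
            funext i
            simp [lp.coeFn_smul] }
        1
        (fun ξ => by
          rw [one_mul]
          refine (pi_norm_le_iff_of_nonneg (norm_nonneg _)).mpr fun i => ?_
          exact lp.norm_apply_le_norm two_ne_zero ξ (i : ι))
    have hG : IsCompactOperator G := by
      refine ⟨G '' Metric.closedBall 0 1,
        (isCompact_closedBall (0 : ↥s → ℂ) 1).image G.continuous, ?_⟩
      exact Filter.mem_of_superset (Metric.closedBall_mem_nhds 0 one_pos)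
        (Set.subset_preimage_image _ _)
    have hfac : ⇑(F s) = ⇑G ∘ ⇑P := by
      funext ξ
      apply lp.ext
      funext i
      change (if i ∈ s then a i else 0) * ξ i =
        (if h : i ∈ s then a i * (P ξ) ⟨i, h⟩ else 0)
      by_cases h : i ∈ s
      · rw [if_pos h, dif_pos h]; rfl
      · rw [if_neg h, dif_neg h, zero_mul]
    rw [show IsCompactOperator (F s) ↔ IsCompactOperator (⇑G ∘ ⇑P) by rw [hfac]]
    exact hG.comp_clm P
  have htend : Filter.Tendsto F Filter.atTop (𝓝 T) := by
    rw [Metric.tendsto_atTop]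
    intro ε hε
    have hhalf : (0 : ℝ) < ε / 2 := by linarith
    have hfin : {i : ι | a i ∉ Metric.ball (0 : ℂ) (ε / 2)}.Finite := by
      have := h0 (Metric.ball_mem_nhds (0 : ℂ) hhalf)
      rw [Filter.mem_map, Filter.mem_cofinite] at this
      exact this
    refine ⟨hfin.toFinset, fun s hs => ?_⟩
    rw [dist_eq_norm]
    have hb : ‖F s - T‖ ≤ ε / 2 := by
      apply ContinuousLinearMap.opNorm_le_bound _ hhalf.le
      intro ξ
      apply lp_norm_le_mul hhalf.le
      intro i
      have hcoord : ((F s - T) ξ) i =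
          ((if i ∈ s then a i else 0) - a i) * ξ i := by
        rw [ContinuousLinearMap.sub_apply, lp.coeFn_sub, Pi.sub_apply]
        change (if i ∈ s then a i else 0) * ξ i - a i * ξ i = _
        ring
      rw [hcoord, norm_mul]
      refine mul_le_mul_of_nonneg_right ?_ (norm_nonneg _)
      by_cases h : i ∈ s
      · simp [h, hhalf.le]
      · have hi0 : i ∉ hfin.toFinset := fun hmem => h (hs hmem)
        rw [Set.Finite.mem_toFinset, Set.mem_setOf_eq, not_not] at hi0
        rw [Metric.mem_ball, dist_zero_right] at hi0
        simpa [h] using hi0.le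
    linarith
  exact isCompactOperator_of_tendsto htend (Filter.Eventually.of_forall hcpt)

end DiagHelpers

lemma words_len_finite (k : ℕ) (A : Matrix (Fin k) (Fin k) ℕ) (N : ℕ) :
    {w : Words k A | w.1 ≤ N}.Finite := by
  rw [← Set.finite_coe_iff]
  refine Finite.of_injective
    (fun w : ↥{w : Words k A | w.1 ≤ N} =>
      (⟨⟨w.1.1, Nat.lt_succ_of_le w.2⟩, w.1.2.1⟩ :
        Σ n : Fin (N + 1), (Fin ((n : ℕ) + 1) → Fin k))) ?_
  rintro ⟨⟨n, w⟩, hn⟩ ⟨⟨n', w'⟩, hn'⟩ h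
  simp only [Sigma.mk.inj_iff, Fin.mk.injEq] at h
  obtain ⟨rfl, h2⟩ := h
  apply Subtype.ext
  exact Sigma.ext rfl (heq_of_eq (Subtype.ext (eq_of_heq h2)))

theorem stmt1 (k : ℕ) (hk : 1 ≤ k) (A : Matrix (Fin k) (Fin k) ℕ)
    (hA : ZeroOne k A) (hAper : Aperiodic k A)
    (xp : Fin k → ShiftSpace k A) (hxp : ∀ j : Fin k, A j ((xp j).1 0) = 1)
    (φ : ShiftSpace k A → ℝ) (hφc : Continuous φ) (hφpos : ∀ x, 0 < φ x) :
    ∃ K : lp (fun _ : Words k A => ℂ) 2 →L[ℂ] lp (fun _ : Words k A => ℂ) 2,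
      (∀ (ξ : lp (fun _ : Words k A => ℂ) 2) (w : Words k A),
        (K ξ) w =
          (Real.exp (-(birk k A φ (wordLen k A w) (wpt k A xp hxp w))) : ℂ) * ξ w) ∧
      IsCompactOperator K := by
  classical
  haveI : CompactSpace (ShiftSpace k A) := by
    have hcl : IsClosed {x : ℕ → Fin k | ∀ m, A (x m) (x (m + 1)) = 1} := by
      rw [Set.setOf_forall]
      refine isClosed_iInter fun m => ?_
      have h1 : Continuous fun x : ℕ → Fin k => (x m, x (m + 1)) :=
        (continuous_apply m).prodMk (continuous_apply (m + 1))
      have hc : Continuous fun x : ℕ → Fin k => A (x m) (x (m + 1)) :=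
        (continuous_of_discreteTopology
          (f := fun p : Fin k × Fin k => A p.1 p.2)).comp h1
      exact isClosed_eq hc continuous_const
    exact isCompact_iff_compactSpace.mp hcl.isCompact
  haveI : Nonempty (ShiftSpace k A) := ⟨xp ⟨0, hk⟩⟩
  obtain ⟨x₀, -, hx₀⟩ :=
    isCompact_univ.exists_isMinOn Set.univ_nonempty hφc.continuousOn
  set c : ℝ := φ x₀ with hcdef
  have hc : 0 < c := hφpos x₀
  have hcle : ∀ x, c ≤ φ x := fun x => hx₀ (Set.mem_univ x)
  have hbirk : ∀ (n : ℕ) (x : ShiftSpace k A), (n : ℝ) * c ≤ birk k A φ n x := by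
    intro n x
    have := Finset.card_nsmul_le_sum (Finset.range n)
      (fun i => φ ((shift k A)^[i] x)) c (fun i _ => hcle _)
    simpa [birk, nsmul_eq_mul] using this
  set a : Words k A → ℝ :=
    fun w => Real.exp (-(birk k A φ (wordLen k A w) (wpt k A xp hxp w))) with hadef
  have hapos : ∀ w, 0 < a w := fun w => Real.exp_pos _
  have haux : ∀ w, a w ≤ Real.exp (-c) ^ wordLen k A w := by
    intro w
    have h1 : ((wordLen k A w : ℕ) : ℝ) * c ≤
        birk k A φ (wordLen k A w) (wpt k A xp hxp w) := hbirk _ _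
    calc a w ≤ Real.exp (-((wordLen k A w : ℕ) * c)) :=
          Real.exp_le_exp.mpr (neg_le_neg h1)
      _ = Real.exp ((wordLen k A w : ℕ) * (-c)) := by ring_nf
      _ = Real.exp (-c) ^ wordLen k A w := Real.exp_nat_mul _ _
  have ha1 : ∀ w, a w ≤ 1 := by
    intro w
    apply Real.exp_le_one_iff.mpr
    have : (0 : ℝ) ≤ ((wordLen k A w : ℕ) : ℝ) * c :=
      mul_nonneg (Nat.cast_nonneg _) hc.le
    have h1 := hbirk (wordLen k A w) (wpt k A xp hxp w)
    linarith
  set aC : Words k A → ℂ := fun w => (a w : ℂ) with haCdef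
  have hnorm : ∀ w, ‖aC w‖ = a w := by
    intro w
    simp [aC, Complex.norm_real, Real.norm_eq_abs, abs_of_pos (hapos w)]
  have haCb : ∀ w, ‖aC w‖ ≤ 1 := fun w => by rw [hnorm w]; exact ha1 w
  refine ⟨diagCLM aC 1 zero_le_one haCb, fun ξ w => rfl, ?_⟩
  apply isCompactOperator_diagCLM
  -- tendsto cofinite
  have hr0 : (0 : ℝ) ≤ Real.exp (-c) := (Real.exp_pos _).le
  have hr1 : Real.exp (-c) < 1 := Real.exp_lt_one_iff.mpr (by linarith)
  have hreal : Filter.Tendsto a Filter.cofinite (𝓝 0) := by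
    rw [Metric.tendsto_nhds]
    intro ε hε
    rw [Filter.eventually_cofinite]
    have hpow := tendsto_pow_atTop_nhds_zero_of_lt_one hr0 hr1
    obtain ⟨N, hN⟩ := (hpow.eventually (gt_mem_nhds hε)).exists_forall_of_atTop
    refine (words_len_finite k A N).subset ?_
    intro w hw
    simp only [Set.mem_setOf_eq, not_lt] at hw
    by_contra hle
    simp only [Set.mem_setOf_eq, not_le] at hle
    have hwl : N ≤ wordLen k A w := by
      unfold wordLen; omega
    have : a w < ε := lt_of_le_of_lt (haux w) (hN _ hwl)
    rw [Real.dist_eq, sub_zero, abs_of_pos (hapos w)] at hw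
    linarith
  have : Filter.Tendsto aC Filter.cofinite (𝓝 ((0 : ℝ) : ℂ)) :=
    (Complex.continuous_ofReal.tendsto 0).comp hreal
  simpa using this

end SpectralGibbs
end

section
/- (Ruelle–Perron–Frobenius theorem, uniqueness/simplicity part.) Let α > 0 and let ψ : Σ_A⁺ → ℝ be α-Hölder, and suppose λ > 0 and h : Σ_A⁺ → ℝ is strictly positive, α-Hölder with L_ψ h = λ h, and ν is a Borel probability measure with ∫ L_ψ g dν = λ ∫ g dν for all continuous g. If λ' > 0 and h' : Σ_A⁺ → ℝ is strictly positive, α-Hölder with L_ψ h' = λ' h', then λ' = λ and h' = c·h for some constant c > 0. -/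
open scoped BigOperators Classical
open Filter Topology MeasureTheory

namespace SpectralGibbs

section Aux
variable {k : ℕ} {A : Matrix (Fin k) (Fin k) ℕ}

lemma shiftSpace_isClosed :
    IsClosed {x : ℕ → Fin k | ∀ m, A (x m) (x (m + 1)) = 1} := by
  have heq : {x : ℕ → Fin k | ∀ m, A (x m) (x (m + 1)) = 1} =
      ⋂ m : ℕ, (fun x : ℕ → Fin k => (x m, x (m + 1))) ⁻¹' {p | A p.1 p.2 = 1} := by
    ext x; simp [Set.mem_iInter]
  rw [heq]
  refine isClosed_iInter fun m => ?_
  exact (Set.toFinite _).isClosed.preimage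
    ((continuous_apply m).prodMk (continuous_apply (m + 1)))

instance : CompactSpace (ShiftSpace k A) :=
  isCompact_iff_compactSpace.mp ((shiftSpace_isClosed (A := A)).isCompact)

lemma dist'_nonneg (x y : ShiftSpace k A) : 0 ≤ dist' k A x y := by
  unfold dist'; split_ifs <;> positivity

lemma dist'_le {m : ℕ} {x y : ShiftSpace k A} (hxy : ∀ t, t < m → x.1 t = y.1 t) :
    dist' k A x y ≤ (2 : ℝ)⁻¹ ^ m := by
  unfold dist'
  split_ifs with hne
  · positivity
  · refine pow_le_pow_of_le_one (by norm_num) (by norm_num) ?_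
    refine le_csInf ?_ ?_
    · by_contra hemp
      rw [Set.not_nonempty_iff_eq_empty] at hemp
      apply hne
      apply Subtype.ext; funext t
      by_contra ht
      have : t ∈ {m : ℕ | x.1 m ≠ y.1 m} := ht
      rw [hemp] at this
      exact this
    · intro b hb
      by_contra hlt
      push_neg at hlt
      exact hb (hxy b hlt)
end Aux
section Aux2
variable {k : ℕ} {A : Matrix (Fin k) (Fin k) ℕ}

lemma rpow_pow_eq (α : ℝ) (m : ℕ) :
    ((2 : ℝ)⁻¹ ^ m) ^ α = ((2 : ℝ)⁻¹ ^ α) ^ m := by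
  rw [← Real.rpow_natCast ((2 : ℝ)⁻¹) m, ← Real.rpow_natCast ((2 : ℝ)⁻¹ ^ α) m,
    ← Real.rpow_mul (by norm_num), ← Real.rpow_mul (by norm_num), mul_comm]

lemma holder_continuous {α : ℝ} (hα : 0 < α) {f : ShiftSpace k A → ℝ}
    (hf : IsHolder k A α f) : Continuous f := by
  obtain ⟨C, hC⟩ := hf
  set C' : ℝ := max C 0 with hC'def
  have hC'0 : 0 ≤ C' := le_max_right _ _
  have hC' : ∀ x y : ShiftSpace k A, |f x - f y| ≤ C' * dist' k A x y ^ α := by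
    intro x y
    refine le_trans (hC x y) (mul_le_mul_of_nonneg_right (le_max_left _ _) ?_)
    exact Real.rpow_nonneg (dist'_nonneg x y) α
  rw [continuous_iff_continuousAt]
  intro z
  rw [ContinuousAt, Metric.tendsto_nhds]
  intro ε hε
  -- choose m
  have hr0 : (0:ℝ) ≤ (2 : ℝ)⁻¹ ^ α := Real.rpow_nonneg (by norm_num) α
  have hr1 : |(2 : ℝ)⁻¹ ^ α| < 1 := by
    rw [abs_of_nonneg hr0]
    exact Real.rpow_lt_one (by norm_num) (by norm_num) hα
  have htend : Filter.Tendsto (fun m : ℕ => C' * ((2 : ℝ)⁻¹ ^ α) ^ m)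
      Filter.atTop (nhds 0) := by
    simpa using (tendsto_pow_atTop_nhds_zero_of_abs_lt_one hr1).const_mul C'
  have hev := htend.eventually (eventually_lt_nhds hε)
  obtain ⟨m, hm⟩ := hev.exists
  -- the neighbourhood
  have hUopen : IsOpen {y : ShiftSpace k A | ∀ t < m, y.1 t = z.1 t} := by
    have heq : {y : ShiftSpace k A | ∀ t < m, y.1 t = z.1 t} =
        ⋂ t ∈ Finset.range m, (fun y : ShiftSpace k A => y.1 t) ⁻¹' {z.1 t} := by
      ext y; simp
    rw [heq]
    exact isOpen_biInter_finset fun t _ =>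
      (isOpen_discrete _).preimage ((continuous_apply t).comp continuous_subtype_val)
  filter_upwards [hUopen.mem_nhds (by intro t _; rfl)] with y hy
  rw [Real.dist_eq]
  calc |f y - f z| ≤ C' * dist' k A y z ^ α := hC' y z
    _ ≤ C' * ((2 : ℝ)⁻¹ ^ m) ^ α := by
        refine mul_le_mul_of_nonneg_left ?_ hC'0
        exact Real.rpow_le_rpow (dist'_nonneg y z) (dist'_le hy) hα.le
    _ = C' * ((2 : ℝ)⁻¹ ^ α) ^ m := by rw [rpow_pow_eq]
    _ < ε := hm
end Aux2
section Aux3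
variable {k : ℕ} {A : Matrix (Fin k) (Fin k) ℕ}

lemma transfer_sub_mul (ψ h1 h2 : ShiftSpace k A → ℝ) (c : ℝ) (x : ShiftSpace k A) :
    transfer k A ψ (fun y => h1 y - c * h2 y) x
      = transfer k A ψ h1 x - c * transfer k A ψ h2 x := by
  unfold transfer
  rw [Finset.mul_sum, ← Finset.sum_sub_distrib]
  refine Finset.sum_congr rfl fun i _ => ?_
  split_ifs with hi
  · simp only [smul_eq_mul]; ring
  · simp

lemma transfer_zero_spread (ψ g : ShiftSpace k A → ℝ) (lam : ℝ)
    (hg0 : ∀ x, 0 ≤ g x) (heig : ∀ x, transfer k A ψ g x = lam * g x)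
    (x : ShiftSpace k A) (hx : g x = 0) (i : Fin k) (hi : A i (x.1 0) = 1) :
    g (cons k A i x hi) = 0 := by
  have hsum : transfer k A ψ g x = 0 := by rw [heig, hx, mul_zero]
  unfold transfer at hsum
  have hnn : ∀ j ∈ Finset.univ, (0:ℝ) ≤
      (if h : A j (x.1 0) = 1 then Real.exp (ψ (cons k A j x h)) • g (cons k A j x h) else 0) := by
    intro j _
    split_ifs with hj
    · exact smul_nonneg (Real.exp_pos _).le (hg0 _)
    · exact le_refl 0
  have hterm := (Finset.sum_eq_zero_iff_of_nonneg hnn).mp hsum i (Finset.mem_univ i)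
  rw [dif_pos hi, smul_eq_mul] at hterm
  exact (mul_eq_zero.mp hterm).resolve_left (Real.exp_pos _).ne'

lemma shift_iterate_apply (n : ℕ) (x : ShiftSpace k A) (t : ℕ) :
    ((shift k A)^[n] x).1 t = x.1 (t + n) := by
  induction n generalizing x with
  | zero => rfl
  | succ n ih =>
    rw [Function.iterate_succ_apply, ih]
    show x.1 (t + n + 1) = x.1 (t + (n + 1))
    congr 1

lemma cons_shift (y : ShiftSpace k A) :
    cons k A (y.1 0) (shift k A y) (y.2 0) = y := by
  apply Subtype.ext; funext m
  cases m with
  | zero => rfl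
  | succ m => rfl

lemma zero_on_preimages (ψ g : ShiftSpace k A → ℝ) (lam : ℝ)
    (hg0 : ∀ x, 0 ≤ g x) (heig : ∀ x, transfer k A ψ g x = lam * g x)
    (x₀ : ShiftSpace k A) (hx₀ : g x₀ = 0) :
    ∀ n (y : ShiftSpace k A), (shift k A)^[n] y = x₀ → g y = 0 := by
  intro n
  induction n with
  | zero => intro y hy; rw [show y = x₀ from hy]; exact hx₀
  | succ n ih =>
    intro y hy
    have h1 : (shift k A)^[n] (shift k A y) = x₀ := by
      rw [← Function.iterate_succ_apply]; exact hy
    have h2 := ih _ h1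
    have h3 := transfer_zero_spread ψ g lam hg0 heig (shift k A y) h2 (y.1 0) (y.2 0)
    rwa [cons_shift] at h3

lemma exists_path (hA : ZeroOne k A) :
    ∀ n (i j : Fin k), 0 < (A ^ n) i j →
      ∃ u : ℕ → Fin k, u 0 = i ∧ u n = j ∧ ∀ s < n, A (u s) (u (s + 1)) = 1 := by
  intro n
  induction n with
  | zero =>
    intro i j hpos
    rw [pow_zero, Matrix.one_apply] at hpos
    by_cases hij : i = j
    · exact ⟨fun _ => i, rfl, by rw [hij], fun s hs => absurd hs (by omega)⟩
    · rw [if_neg hij] at hpos; exact absurd hpos (lt_irrefl 0)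
  | succ n ih =>
    intro i j hpos
    rw [pow_succ, Matrix.mul_apply] at hpos
    have hex : ∃ l, 0 < (A ^ n) i l * A l j := by
      by_contra hc
      push_neg at hc
      have hz : ∑ l, (A ^ n) i l * A l j = 0 :=
        Finset.sum_eq_zero fun l _ => Nat.le_zero.mp (hc l)
      omega
    obtain ⟨l, hl⟩ := hex
    have h1 : 0 < (A ^ n) i l := by
      rcases Nat.eq_zero_or_pos ((A ^ n) i l) with h0 | h0
      · rw [h0, zero_mul] at hl; exact absurd hl (lt_irrefl 0)
      · exact h0
    have h2 : A l j = 1 := by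
      rcases hA l j with h0 | h0
      · rw [h0, mul_zero] at hl; exact absurd hl (lt_irrefl 0)
      · exact h0
    obtain ⟨u, hu0, hun, hua⟩ := ih i l h1
    refine ⟨fun s => if s ≤ n then u s else j, by simp [hu0], by simp, ?_⟩
    intro s hs
    by_cases hsn : s + 1 ≤ n
    · show A (if s ≤ n then u s else j) (if s + 1 ≤ n then u (s + 1) else j) = 1
      rw [if_pos (by omega : s ≤ n), if_pos hsn]
      exact hua s (by omega)
    · have hseq : s = n := by omega
      rw [hseq]
      show A (if n ≤ n then u n else j) (if n + 1 ≤ n then u (n + 1) else j) = 1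
      rw [if_pos (le_refl n), if_neg (by omega : ¬ n + 1 ≤ n), hun]
      exact h2

lemma exists_point (hk : 1 ≤ k) (hA : ZeroOne k A) (hAper : Aperiodic k A) :
    Nonempty (ShiftSpace k A) := by
  obtain ⟨n, hn, hpos⟩ := hAper
  have hnext : ∀ i : Fin k, ∃ j, A i j = 1 := by
    intro i
    obtain ⟨u, hu0, _, hua⟩ := exists_path hA n i i (hpos i i)
    exact ⟨u 1, by rw [← hu0]; exact hua 0 hn⟩
  choose next hnextp using hnext
  exact ⟨⟨fun m => next^[m] ⟨0, hk⟩,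
    fun m => by
      show A (next^[m] ⟨0, hk⟩) (next^[m + 1] ⟨0, hk⟩) = 1
      rw [Function.iterate_succ_apply']
      exact hnextp _⟩⟩
end Aux3
section Aux4
variable {k : ℕ} {A : Matrix (Fin k) (Fin k) ℕ}

lemma exists_approx (hA : ZeroOne k A) (hAper : Aperiodic k A)
    (z x₀ : ShiftSpace k A) (m : ℕ) :
    ∃ (y : ShiftSpace k A) (K : ℕ),
      (∀ t ≤ m, y.1 t = z.1 t) ∧ (shift k A)^[K] y = x₀ := by
  obtain ⟨n, hn, hpos⟩ := hAper
  obtain ⟨u, hu0, hun, hua⟩ := exists_path hA n (z.1 m) (x₀.1 0) (hpos _ _)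
  set yseq : ℕ → Fin k := fun t =>
    if t ≤ m then z.1 t else if t ≤ m + n then u (t - m) else x₀.1 (t - (m + n))
    with hyseq
  have hval : ∀ t, (t ≤ m → yseq t = z.1 t) ∧ (m < t → t ≤ m + n → yseq t = u (t - m)) ∧
      (m + n < t → yseq t = x₀.1 (t - (m + n))) := by
    intro t
    refine ⟨fun h1 => by simp only [hyseq, if_pos h1], fun h1 h2 => ?_, fun h1 => ?_⟩
    · simp only [hyseq, if_neg (by omega : ¬ t ≤ m), if_pos h2]
    · simp only [hyseq, if_neg (by omega : ¬ t ≤ m), if_neg (by omega : ¬ t ≤ m + n)]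
  have hmem : ∀ t, A (yseq t) (yseq (t + 1)) = 1 := by
    intro t
    rcases lt_trichotomy t m with ht | ht | ht
    · rw [(hval t).1 (by omega)]
      by_cases ht1 : t + 1 ≤ m
      · rw [(hval (t+1)).1 ht1]; exact z.2 t
      · -- t + 1 = m impossible since t < m means t+1 ≤ m; contradiction
        omega
    · subst ht
      rw [(hval t).1 (le_refl t), (hval (t+1)).2.1 (by omega) (by omega)]
      have : t + 1 - t = 1 := by omega
      rw [this, ← hu0]
      exact hua 0 (by omega)
    · by_cases ht2 : t + 1 ≤ m + n
      · rw [(hval t).2.1 ht (by omega), (hval (t+1)).2.1 (by omega) ht2]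
        have h3 : t + 1 - m = (t - m) + 1 := by omega
        rw [h3]
        exact hua (t - m) (by omega)
      · by_cases ht3 : t ≤ m + n
        · -- t = m + n
          have ht4 : t = m + n := by omega
          rw [(hval t).2.1 ht ht3, (hval (t+1)).2.2 (by omega)]
          have h4 : t - m = n := by omega
          have h5 : t + 1 - (m + n) = 1 := by omega
          rw [h4, h5, hun]
          exact x₀.2 0
        · rw [(hval t).2.2 (by omega), (hval (t+1)).2.2 (by omega)]
          have h6 : t + 1 - (m + n) = (t - (m + n) - 1) + 1 + 1 := by omega
          have h7 : t - (m + n) = (t - (m + n) - 1) + 1 := by omega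
          rw [h6, h7]
          exact x₀.2 _
  refine ⟨⟨yseq, hmem⟩, m + n, fun t ht => (hval t).1 ht, ?_⟩
  apply Subtype.ext; funext t
  rw [shift_iterate_apply]
  show yseq (t + (m + n)) = x₀.1 t
  cases t with
  | zero =>
    rw [(hval (0 + (m + n))).2.1 (by omega) (by omega)]
    have : 0 + (m + n) - m = n := by omega
    rw [this, hun]
  | succ t =>
    rw [(hval (t + 1 + (m + n))).2.2 (by omega)]
    have : t + 1 + (m + n) - (m + n) = t + 1 := by omega
    rw [this]
instance : OpensMeasurableSpace (ShiftSpace k A) :=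
  Subtype.opensMeasurableSpace {x : ℕ → Fin k | ∀ m, A (x m) (x (m + 1)) = 1}

end Aux4


theorem stmt4 (k : ℕ) (hk : 1 ≤ k) (A : Matrix (Fin k) (Fin k) ℕ)
    (hA : ZeroOne k A) (hAper : Aperiodic k A)
    (α : ℝ) (hα : 0 < α) (ψ : ShiftSpace k A → ℝ) (hψ : IsHolder k A α ψ)
    (lam : ℝ) (hlam : 0 < lam) (h : ShiftSpace k A → ℝ)
    (hhpos : ∀ x, 0 < h x) (hhH : IsHolder k A α h)
    (heig : ∀ x, transfer k A ψ h x = lam * h x)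
    (ν : Measure (ShiftSpace k A)) (hν : IsProbabilityMeasure ν)
    (hνeig : ∀ g : ShiftSpace k A → ℝ, Continuous g →
      ∫ x, transfer k A ψ g x ∂ν = lam * ∫ x, g x ∂ν)
    (lam' : ℝ) (hlam' : 0 < lam') (h' : ShiftSpace k A → ℝ)
    (hh'pos : ∀ x, 0 < h' x) (hh'H : IsHolder k A α h')
    (heig' : ∀ x, transfer k A ψ h' x = lam' * h' x) :
    lam' = lam ∧ ∃ c : ℝ, 0 < c ∧ ∀ x, h' x = c * h x := by
  haveI hne : Nonempty (ShiftSpace k A) := exists_point hk hA hAper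
  have hch : Continuous h := holder_continuous hα hhH
  have hch' : Continuous h' := holder_continuous hα hh'H
  have hint' : Integrable h' ν := by
    apply hch'.integrable_of_hasCompactSupport
    exact IsCompact.of_isClosed_subset isCompact_univ (isClosed_tsupport _) (Set.subset_univ _)
  obtain ⟨x₁, -, hx₁'⟩ := isCompact_univ.exists_isMinOn Set.univ_nonempty hch'.continuousOn
  have hx₁ : ∀ x, h' x₁ ≤ h' x := fun x => isMinOn_iff.mp hx₁' x trivial
  have hIpos : 0 < ∫ x, h' x ∂ν := by
    have hle : ∫ _x, h' x₁ ∂ν ≤ ∫ x, h' x ∂ν :=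
      integral_mono (integrable_const _) hint' (fun x => hx₁ x)
    rw [integral_const] at hle
    simp only [measureReal_def, measure_univ, ENNReal.toReal_one, one_smul] at hle
    exact lt_of_lt_of_le (hh'pos x₁) hle
  have heq : lam' = lam := by
    have h1 := hνeig h' hch'
    have h2 : ∫ x, transfer k A ψ h' x ∂ν = lam' * ∫ x, h' x ∂ν := by
      simp_rw [heig']
      exact integral_const_mul lam' h'
    refine mul_right_cancel₀ (ne_of_gt hIpos) ?_
    rw [← h2, h1]
  subst heq
  refine ⟨rfl, ?_⟩
  have hr : Continuous fun x => h' x / h x := hch'.div hch fun x => (hhpos x).ne'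
  obtain ⟨x₀, -, hx₀'⟩ := isCompact_univ.exists_isMinOn Set.univ_nonempty hr.continuousOn
  have hx₀ : ∀ x : ShiftSpace k A, h' x₀ / h x₀ ≤ h' x / h x :=
    fun x => isMinOn_iff.mp hx₀' x trivial
  set c := h' x₀ / h x₀ with hc
  have hcpos : 0 < c := div_pos (hh'pos x₀) (hhpos x₀)
  set g := fun x => h' x - c * h x with hg
  have hg0 : ∀ x, 0 ≤ g x := by
    intro x
    have h1 : c ≤ h' x / h x := hx₀ x
    have h2 : c * h x ≤ h' x := (le_div_iff₀ (hhpos x)).mp h1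
    simp only [hg]
    linarith
  have hgx₀ : g x₀ = 0 := by
    simp only [hg, hc]
    rw [div_mul_cancel₀ _ (hhpos x₀).ne']
    ring
  have hgeig : ∀ x, transfer k A ψ g x = lam' * g x := by
    intro x
    simp only [hg]
    rw [transfer_sub_mul, heig, heig']
    ring
  have hgH : IsHolder k A α g := by
    obtain ⟨C1, hC1⟩ := hh'H
    obtain ⟨C2, hC2⟩ := hhH
    refine ⟨C1 + c * C2, fun x y => ?_⟩
    have e1 : g x - g y = (h' x - h' y) - c * (h x - h y) := by simp only [hg]; ring
    rw [e1]
    calc ‖(h' x - h' y) - c * (h x - h y)‖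
        ≤ ‖h' x - h' y‖ + ‖c * (h x - h y)‖ := norm_sub_le _ _
      _ = ‖h' x - h' y‖ + c * ‖h x - h y‖ := by
          rw [norm_mul, Real.norm_eq_abs c, abs_of_pos hcpos]
      _ ≤ C1 * dist' k A x y ^ α + c * (C2 * dist' k A x y ^ α) :=
          add_le_add (hC1 x y) (mul_le_mul_of_nonneg_left (hC2 x y) hcpos.le)
      _ = (C1 + c * C2) * dist' k A x y ^ α := by ring
  obtain ⟨C, hC⟩ := hgH
  set C' := max C 0 with hC'def
  have hC'0 : 0 ≤ C' := le_max_right _ _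
  have hzero : ∀ x, g x = 0 := by
    intro z
    have hbound : ∀ m : ℕ, |g z| ≤ C' * ((2 : ℝ)⁻¹ ^ α) ^ m := by
      intro m
      obtain ⟨y, K, hyag, hyK⟩ := exists_approx hA hAper z x₀ m
      have hgy : g y = 0 := zero_on_preimages ψ g lam' hg0 hgeig x₀ hgx₀ K y hyK
      have h1 : |g z| = ‖g z - g y‖ := by rw [hgy, sub_zero, Real.norm_eq_abs]
      rw [h1]
      calc ‖g z - g y‖ ≤ C * dist' k A z y ^ α := hC z y
        _ ≤ C' * dist' k A z y ^ α :=
            mul_le_mul_of_nonneg_right (le_max_left _ _)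
              (Real.rpow_nonneg (dist'_nonneg _ _) α)
        _ ≤ C' * ((2 : ℝ)⁻¹ ^ m) ^ α := by
            refine mul_le_mul_of_nonneg_left ?_ hC'0
            refine Real.rpow_le_rpow (dist'_nonneg _ _) ?_ hα.le
            exact dist'_le fun t ht => (hyag t (le_of_lt ht)).symm
        _ = C' * ((2 : ℝ)⁻¹ ^ α) ^ m := by rw [rpow_pow_eq]
    have hr1 : |(2 : ℝ)⁻¹ ^ α| < 1 := by
      rw [abs_of_nonneg (Real.rpow_nonneg (by norm_num) α)]
      exact Real.rpow_lt_one (by norm_num) (by norm_num) hα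
    have htend : Filter.Tendsto (fun m : ℕ => C' * ((2 : ℝ)⁻¹ ^ α) ^ m)
        Filter.atTop (nhds 0) := by
      simpa using (tendsto_pow_atTop_nhds_zero_of_abs_lt_one hr1).const_mul C'
    have hle0 : |g z| ≤ 0 := ge_of_tendsto' htend hbound
    exact abs_nonpos_iff.mp hle0
  refine ⟨c, hcpos, fun x => ?_⟩
  have hx := hzero x
  simp only [hg] at hx
  linarith


end SpectralGibbs
end

section
/- (Strict monotonicity of the leading eigenvalue.) Let φ : Σ_A⁺ → ℝ be continuous with φ(x) > 0 for all x. Suppose s < t are real numbers and that λ_s, λ_t > 0 admit strictly positive continuous functions h_s, h_t with L_{−sφ} h_s = λ_s h_s and L_{−tφ} h_t = λ_t h_t. Then λ_t ≤ e^{−(t−s)·inf φ} λ_s; in particular λ_t < λ_s. -/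
open scoped BigOperators Classical
open Filter Topology MeasureTheory

namespace SpectralGibbs

theorem stmt9 (k : ℕ) (hk : 1 ≤ k) (A : Matrix (Fin k) (Fin k) ℕ)
    (hA : ZeroOne k A) (hAper : Aperiodic k A)
    (φ : ShiftSpace k A → ℝ) (hφc : Continuous φ) (hφpos : ∀ x, 0 < φ x)
    (s t : ℝ) (hst : s < t)
    (lams lamt : ℝ) (hlams : 0 < lams) (hlamt : 0 < lamt)
    (hs ht : ShiftSpace k A → ℝ)
    (hhs : ∀ x, 0 < hs x) (hht : ∀ x, 0 < ht x)
    (hhsc : Continuous hs) (hhtc : Continuous ht)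
    (heigs : ∀ x, transfer k A (fun y => -(s * φ y)) hs x = lams * hs x)
    (heigt : ∀ x, transfer k A (fun y => -(t * φ y)) ht x = lamt * ht x) :
    lamt ≤ Real.exp (-((t - s) * ⨅ x : ShiftSpace k A, φ x)) * lams ∧
      lamt < lams := by
  classical
  -- Compactness of the shift space
  have hclosed : IsClosed {x : ℕ → Fin k | ∀ m, A (x m) (x (m+1)) = 1} := by
    have heq : {x : ℕ → Fin k | ∀ m, A (x m) (x (m+1)) = 1} =
        ⋂ m : ℕ, {x : ℕ → Fin k | A (x m) (x (m+1)) = 1} := by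
      ext x; simp [Set.mem_iInter]
    rw [heq]
    refine isClosed_iInter fun m => ?_
    have hc : Continuous fun x : ℕ → Fin k => A (x m) (x (m+1)) := by
      have h1 : Continuous fun x : ℕ → Fin k => (x m, x (m+1)) :=
        (continuous_apply m).prodMk (continuous_apply (m+1))
      exact (continuous_of_discreteTopology
        (f := fun p : Fin k × Fin k => A p.1 p.2)).comp h1
    exact isClosed_eq hc continuous_const
  haveI : CompactSpace (ShiftSpace k A) :=
    isCompact_iff_compactSpace.mp hclosed.isCompact
  -- Nonemptiness of the shift space
  have hnext : ∀ i : Fin k, ∃ j : Fin k, A i j = 1 := by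
    intro i
    obtain ⟨n, hn1, hn⟩ := hAper
    by_contra h
    push_neg at h
    have hzero : ∀ j, A i j = 0 := fun j => (hA i j).resolve_right (h j)
    obtain ⟨m, rfl⟩ := Nat.exists_eq_add_of_le hn1
    have h0 : (A ^ (1 + m)) i i = 0 := by
      rw [pow_add, pow_one, Matrix.mul_apply]
      exact Finset.sum_eq_zero fun l _ => by rw [hzero l, zero_mul]
    have := hn i i
    rw [h0] at this
    exact lt_irrefl 0 this
  let f : ℕ → Fin k := fun n =>
    Nat.rec ⟨0, hk⟩ (fun _ prev => Classical.choose (hnext prev)) n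
  have hf : ∀ m, A (f m) (f (m+1)) = 1 := fun m => Classical.choose_spec (hnext (f m))
  haveI : Nonempty (ShiftSpace k A) := ⟨⟨f, hf⟩⟩
  -- The infimum of φ is attained and positive
  obtain ⟨xm, -, hxm'⟩ := isCompact_univ.exists_isMinOn Set.univ_nonempty hφc.continuousOn
  have hxm : ∀ y : ShiftSpace k A, φ xm ≤ φ y := fun y => isMinOn_iff.mp hxm' y trivial
  set m0 : ℝ := ⨅ x : ShiftSpace k A, φ x with hm0
  have hbdd : BddBelow (Set.range φ) := ⟨φ xm, by rintro _ ⟨y, rfl⟩; exact hxm y⟩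
  have hmle : ∀ y, m0 ≤ φ y := fun y => ciInf_le hbdd y
  have hmge : φ xm ≤ m0 := le_ciInf fun y => hxm y
  have hm0pos : 0 < m0 := lt_of_lt_of_le (hφpos xm) hmge
  -- Maximize ht / hs
  obtain ⟨x0, -, hx0'⟩ := isCompact_univ.exists_isMaxOn Set.univ_nonempty
    ((hhtc.div hhsc (fun x => (hhs x).ne')).continuousOn)
  have hx0 : ∀ y : ShiftSpace k A, ht y / hs y ≤ ht x0 / hs x0 :=
    fun y => isMaxOn_iff.mp hx0' y trivial
  set c : ℝ := Real.exp (-((t - s) * m0)) with hc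
  -- key inequality
  have key : transfer k A (fun y => -(t * φ y)) ht x0 ≤
      (c * (ht x0 / hs x0)) * transfer k A (fun y => -(s * φ y)) hs x0 := by
    unfold transfer
    rw [Finset.mul_sum]
    refine Finset.sum_le_sum fun i _ => ?_
    by_cases h : A i (x0.1 0) = 1
    · rw [dif_pos h, dif_pos h]
      set y := cons k A i x0 h with hy
      simp only [smul_eq_mul]
      have h1 : ht y ≤ (ht x0 / hs x0) * hs y := by
        calc ht y = (ht y / hs y) * hs y := (div_mul_cancel₀ _ (hhs y).ne').symm
          _ ≤ (ht x0 / hs x0) * hs y :=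
            mul_le_mul_of_nonneg_right (hx0 y) (hhs y).le
      have e1 : Real.exp (-(t * φ y)) =
          Real.exp (-((t-s) * φ y)) * Real.exp (-(s * φ y)) := by
        rw [← Real.exp_add]; ring_nf
      have e2 : Real.exp (-((t-s) * φ y)) ≤ c := by
        apply Real.exp_le_exp.mpr
        have := hmle y
        nlinarith
      calc Real.exp (-(t * φ y)) * ht y
          = Real.exp (-((t-s) * φ y)) * (Real.exp (-(s * φ y)) * ht y) := by
            rw [e1]; ring
        _ ≤ c * (Real.exp (-(s * φ y)) * ht y) :=
            mul_le_mul_of_nonneg_right e2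
              (mul_nonneg (Real.exp_nonneg _) (hht y).le)
        _ ≤ c * (Real.exp (-(s * φ y)) * ((ht x0 / hs x0) * hs y)) :=
            mul_le_mul_of_nonneg_left
              (mul_le_mul_of_nonneg_left h1 (Real.exp_nonneg _))
              (Real.exp_nonneg _)
        _ = (c * (ht x0 / hs x0)) * (Real.exp (-(s * φ y)) * hs y) := by ring
    · rw [dif_neg h, dif_neg h]
      simp
  rw [heigt x0, heigs x0] at key
  have hrs : c * (ht x0 / hs x0) * (lams * hs x0) = (c * lams) * ht x0 := by
    field_simp [(hhs x0).ne']
  rw [hrs] at key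
  have hle : lamt ≤ c * lams := le_of_mul_le_mul_right key (hht x0)
  constructor
  · exact hle
  · have hc1 : c < 1 := by
      rw [hc, Real.exp_lt_one_iff]
      nlinarith
    calc lamt ≤ c * lams := hle
      _ < 1 * lams := by nlinarith [Real.exp_nonneg (-((t - s) * m0))]
      _ = lams := one_mul _

end SpectralGibbs
end
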